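/- For every n ≥ 0, (1/r_{n+2} - 1/r_{n+1}) = m (1 - r_{n+1}) (1/r_{n+1} - 1/r_n). -/
import Mathlib

open Filter Finset Topology

/-- For the Derrida–Retaux parameter recursion, for every `n ≥ 0`:
`(1/r_{n+2} - 1/r_{n+1}) = m (1 - r_{n+1}) (1/r_{n+1} - 1/r_n)`. -/
theorem stmt3 (m : ℝ) (hm : 1 < m) (r p : ℕ → ℝ)
    (hmem : ∀ n, r n ∈ Set.Ioo (0 : ℝ) 1 ∧ p n ∈ Set.Ioo (0 : ℝ) 1)
    (hrec_r : ∀ n, r (n + 1) = r n / (m - (m - 1) * p n))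
    (hrec_p : ∀ n, p (n + 1) = 1 - (1 - r (n + 1)) * (1 - r (n + 1) * p n / r n)) :
    ∀ n : ℕ,
      1 / r (n + 2) - 1 / r (n + 1) = m * (1 - r (n + 1)) * (1 / r (n + 1) - 1 / r n) := by
  intro n
  obtain ⟨⟨hr0, _⟩, ⟨hp0, hp1⟩⟩ := hmem n
  obtain ⟨⟨hr0', _⟩, ⟨hp0', hp1'⟩⟩ := hmem (n + 1)
  have hd : (0:ℝ) < m - (m - 1) * p n := by nlinarith
  have hd' : (0:ℝ) < m - (m - 1) * p (n + 1) := by nlinarith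
  have h1 : r (n + 1) = r n / (m - (m - 1) * p n) := hrec_r n
  have h2 : r (n + 2) = r (n + 1) / (m - (m - 1) * p (n + 1)) := hrec_r (n + 1)
  have h3 := hrec_p n
  rw [h2, h3, h1]
  rw [h1] at h3
  field_simp
  ring
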